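/- Let $A$ be a compact abelian group, $\gamma:\mathbb{R}\to A$ a continuous homomorphism with dense range, and define on $\mathbb{R}^n\times\mathbb{R}^n\times A$ the multiplication $(p,q,z)(p',q',z')=(p+p',q+q',z\,\gamma(p\cdot q')\,z')$. Then this makes $\mathbb{R}^n\times\mathbb{R}^n\times A$ a topological group, and the map $\tilde\gamma(p,q,t)=(p,q,\gamma(t))$ is a continuous injective group homomorphism from $\mathbb{H}_n$ into it with dense range. -/

import Mathlib

noncomputable section

open Complex MeasureTheory

/-- Underlying data of the polarized Heisenberg group `ℍ_n`. -/
structure Heis (n : ℕ) where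
  p : Fin n → ℝ
  q : Fin n → ℝ
  t : ℝ

/-- The standard dot product on `ℝⁿ`. -/
def dotR {n : ℕ} (x y : Fin n → ℝ) : ℝ := ∑ i, x i * y i

namespace Heis

variable {n : ℕ}

lemma ext' {a b : Heis n} (h1 : a.p = b.p) (h2 : a.q = b.q) (h3 : a.t = b.t) : a = b := by
  cases a; cases b; simp_all

instance : Mul (Heis n) := ⟨fun a b => ⟨a.p + b.p, a.q + b.q, a.t + dotR a.p b.q + b.t⟩⟩
instance : One (Heis n) := ⟨⟨0, 0, 0⟩⟩
instance : Inv (Heis n) := ⟨fun a => ⟨-a.p, -a.q, dotR a.p a.q - a.t⟩⟩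

@[simp] lemma mul_p (a b : Heis n) : (a * b).p = a.p + b.p := rfl
@[simp] lemma mul_q (a b : Heis n) : (a * b).q = a.q + b.q := rfl
@[simp] lemma mul_t (a b : Heis n) : (a * b).t = a.t + dotR a.p b.q + b.t := rfl
@[simp] lemma inv_p (a : Heis n) : (a⁻¹).p = -a.p := rfl
@[simp] lemma inv_q (a : Heis n) : (a⁻¹).q = -a.q := rfl
@[simp] lemma inv_t (a : Heis n) : (a⁻¹).t = dotR a.p a.q - a.t := rfl
@[simp] lemma one_p : (1 : Heis n).p = 0 := rfl
@[simp] lemma one_q : (1 : Heis n).q = 0 := rfl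
@[simp] lemma one_t : (1 : Heis n).t = 0 := rfl

instance : Group (Heis n) where
  mul := (· * ·)
  one := 1
  inv := (·⁻¹)
  mul_assoc a b c := by
    refine ext' ?_ ?_ ?_
    · simp [add_assoc]
    · simp [add_assoc]
    · simp only [mul_t, mul_p, mul_q, dotR, Pi.add_apply, add_mul, mul_add,
        Finset.sum_add_distrib]
      ring
  one_mul a := by
    refine ext' ?_ ?_ ?_ <;> simp [dotR]
  mul_one a := by
    refine ext' ?_ ?_ ?_ <;> simp [dotR]
  inv_mul_cancel a := by
    refine ext' ?_ ?_ ?_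
    · simp
    · simp
    · simp only [mul_t, inv_t, inv_p, one_t, dotR, Pi.neg_apply, neg_mul,
        Finset.sum_neg_distrib]
      ring

instance : TopologicalSpace (Heis n) :=
  TopologicalSpace.induced (fun a => (a.p, a.q, a.t)) inferInstance

end Heis

/-- The partial compactification multiplication on `ℝⁿ × ℝⁿ × A`:
`(p,q,z)(p',q',z') = (p+p', q+q', z γ(p·q') z')`. -/
def partMul {n : ℕ} {A : Type*} [CommGroup A] (γ : ℝ → A)
    (a b : (Fin n → ℝ) × (Fin n → ℝ) × A) : (Fin n → ℝ) × (Fin n → ℝ) × A :=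
  (a.1 + b.1, a.2.1 + b.2.1, a.2.2 * γ (dotR a.1 b.2.1) * b.2.2)

/-- The proposed inverse `(p,q,z)⁻¹ = (-p, -q, γ(p·q) z⁻¹)`. -/
def partInv {n : ℕ} {A : Type*} [CommGroup A] (γ : ℝ → A)
    (a : (Fin n → ℝ) × (Fin n → ℝ) × A) : (Fin n → ℝ) × (Fin n → ℝ) × A :=
  (-a.1, -a.2.1, γ (dotR a.1 a.2.1) * a.2.2⁻¹)

/-- Given a compact abelian group `A` and a continuous injective homomorphism
`γ : ℝ → A` with dense range, the multiplication
`(p,q,z)(p',q',z') = (p+p', q+q', z γ(p·q') z')` makes `ℝⁿ × ℝⁿ × A` a topological group,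
and `γ̃(p,q,t) = (p,q,γ(t))` is a continuous injective group homomorphism from `ℍ_n` into
it with dense range. -/
theorem partial_compactification (n : ℕ) {A : Type*} [CommGroup A] [TopologicalSpace A]
    [IsTopologicalGroup A] [CompactSpace A]
    (γ : ℝ → A) (hcont : Continuous γ) (hhom : ∀ s t : ℝ, γ (s + t) = γ s * γ t)
    (hdense : DenseRange γ) (hinj : Function.Injective γ) :
    (∀ a b c : (Fin n → ℝ) × (Fin n → ℝ) × A,
        partMul γ (partMul γ a b) c = partMul γ a (partMul γ b c)) ∧
    (∀ a : (Fin n → ℝ) × (Fin n → ℝ) × A,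
        partMul γ ((0 : Fin n → ℝ), (0 : Fin n → ℝ), (1 : A)) a = a ∧
        partMul γ a ((0 : Fin n → ℝ), (0 : Fin n → ℝ), (1 : A)) = a) ∧
    (∀ a : (Fin n → ℝ) × (Fin n → ℝ) × A,
        partMul γ a (partInv γ a) = ((0 : Fin n → ℝ), (0 : Fin n → ℝ), (1 : A))) ∧
    Continuous (fun x : ((Fin n → ℝ) × (Fin n → ℝ) × A) × ((Fin n → ℝ) × (Fin n → ℝ) × A) =>
        partMul γ x.1 x.2) ∧
    Continuous (partInv γ (n := n)) ∧
    (let γ' : Heis n → (Fin n → ℝ) × (Fin n → ℝ) × A := fun g => (g.p, g.q, γ g.t);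
      Continuous γ' ∧ Function.Injective γ' ∧
      (∀ g g' : Heis n, γ' (g * g') = partMul γ (γ' g) (γ' g')) ∧
      DenseRange γ') := by
  have hγ0 : γ 0 = 1 := by
    have h := hhom 0 0
    rw [add_zero] at h
    exact mul_eq_left.mp h.symm
  have hγinv : ∀ t : ℝ, γ (-t) = (γ t)⁻¹ := fun t =>
    eq_inv_of_mul_eq_one_left (by rw [← hhom]; simp [hγ0])
  have hdl : ∀ (x y z : Fin n → ℝ), dotR (x + y) z = dotR x z + dotR y z := by
    intro x y z
    simp [dotR, add_mul, Finset.sum_add_distrib]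
  have hdr : ∀ (x y z : Fin n → ℝ), dotR x (y + z) = dotR x y + dotR x z := by
    intro x y z
    simp [dotR, mul_add, Finset.sum_add_distrib]
  have hdn : ∀ (x y : Fin n → ℝ), dotR x (-y) = -dotR x y := by
    intro x y
    simp [dotR]
  have hcd : Continuous fun x : (Fin n → ℝ) × (Fin n → ℝ) => dotR x.1 x.2 := by
    unfold dotR
    exact continuous_finset_sum _ fun i _ =>
      ((continuous_apply i).comp continuous_fst).mul ((continuous_apply i).comp continuous_snd)
  refine ⟨?_, ?_, ?_, ?_, ?_, ?_, ?_, ?_, ?_⟩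
  · intro a b c
    simp only [partMul, Prod.mk.injEq]
    refine ⟨add_assoc _ _ _, add_assoc _ _ _, ?_⟩
    rw [hdl, hdr, hhom, hhom]
    simp [mul_assoc, mul_comm, mul_left_comm]
  · intro a
    constructor
    · show (0 + a.1, 0 + a.2.1, 1 * γ (dotR 0 a.2.1) * a.2.2) = a
      simp [dotR, hγ0]
    · show (a.1 + 0, a.2.1 + 0, a.2.2 * γ (dotR a.1 0) * 1) = a
      simp [dotR, hγ0]
  · intro a
    simp only [partMul, partInv, Prod.mk.injEq]
    refine ⟨by simp, by simp, ?_⟩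
    rw [hdn, hγinv]
    group
  · unfold partMul
    refine Continuous.prodMk ?_ (Continuous.prodMk ?_ ?_)
    · exact (continuous_fst.comp continuous_fst).add (continuous_fst.comp continuous_snd)
    · exact ((continuous_fst.comp continuous_snd).comp continuous_fst).add
        ((continuous_fst.comp continuous_snd).comp continuous_snd)
    · refine Continuous.mul (Continuous.mul ?_ ?_) ?_
      · exact (continuous_snd.comp continuous_snd).comp continuous_fst
      · exact hcont.comp (hcd.comp (Continuous.prodMk
          (continuous_fst.comp continuous_fst)
          ((continuous_fst.comp continuous_snd).comp continuous_snd)))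
      · exact (continuous_snd.comp continuous_snd).comp continuous_snd
  · unfold partInv
    refine Continuous.prodMk continuous_fst.neg (Continuous.prodMk
      (continuous_fst.comp continuous_snd).neg ?_)
    exact (hcont.comp (hcd.comp (Continuous.prodMk continuous_fst
      (continuous_fst.comp continuous_snd)))).mul (continuous_snd.comp continuous_snd).inv
  · -- Continuous γ'
    have hind : Continuous fun a : Heis n => ((a.p, a.q, a.t) :
        (Fin n → ℝ) × (Fin n → ℝ) × ℝ) := continuous_induced_dom
    exact Continuous.prodMk (continuous_fst.comp hind)
      (Continuous.prodMk ((continuous_fst.comp continuous_snd).comp hind)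
        (hcont.comp ((continuous_snd.comp continuous_snd).comp hind)))
  · -- Injective γ'
    intro a b h
    simp only [Prod.mk.injEq] at h
    exact Heis.ext' h.1 h.2.1 (hinj h.2.2)
  · intro g g'
    simp [partMul, hhom]
  · -- Dense range
    have hind : Continuous fun a : Heis n => ((a.p, a.q, a.t) :
        (Fin n → ℝ) × (Fin n → ℝ) × ℝ) := continuous_induced_dom
    have hsurj : Function.Surjective fun a : Heis n => ((a.p, a.q, a.t) :
        (Fin n → ℝ) × (Fin n → ℝ) × ℝ) := fun x => ⟨⟨x.1, x.2.1, x.2.2⟩, rfl⟩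
    have hF : DenseRange (Prod.map (id : (Fin n → ℝ) → _)
        (Prod.map (id : (Fin n → ℝ) → _) γ)) :=
      denseRange_id.prodMap (denseRange_id.prodMap hdense)
    exact hF.comp hsurj.denseRange (continuous_id.prodMap (continuous_id.prodMap hcont))
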